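/- Let w = (u × v)ξ⁻¹ where ξ ∈ Sh(p,q), u ∈ B_p and v ∈ B_q. Then the following disjoint union identities hold: Nega(w) = ξ·Nega(u) ⊎ ξ·(p + Nega(v)); Inv(w) = ξ·Inv(u) ⊎ ξ·((p,p) + Inv(v)) ⊎ ξ·([p] × (p + Nega(v)) ∩ Inv̄(ξ)) ⊎ ξ·((p + Nega̅(v)) × [p] ∩ Ĩnv(ξ)); and Nsp(w) = ξ·Nsp(u) ⊎ ξ·((p,p) + Nsp(v)) ⊎ ξ·([p] × (p + Nega(v)) ∩ Inv̄(ξ)) ⊎ ξ·((p + Nega(v)) × [p] ∩ Ĩnv(ξ)). Here for a set S of indices, ξ·S = {ξ_r : r ∈ S}; for a set S of pairs, ξ·S = {(ξ_r, ξ_s) : (r,s) ∈ S}; p + S = {p + r : r ∈ S}; and (p,p) + S = {(p+r, p+s) : (r,s) ∈ S}. -/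

import Mathlib

open Finset

open scoped Classical

/-- The hyperoctahedral group `𝔅ₙ`, realized as the set of those permutations `w` of `ℤ`
that satisfy `w (-i) = - w i` for all `i` and fix every integer of absolute value `> n`.
One-line notation: `w₁ ⋯ w_n` with `w_i = w i` for `1 ≤ i ≤ n`. -/
def SignedPerm (n : ℕ) : Set (Equiv.Perm ℤ) :=
  {w | (∀ i : ℤ, w (-i) = - w i) ∧ (∀ i : ℤ, (n : ℤ) < |i| → w i = i)}

/-- The inversion set `Inv(w) = {(i,j) : 1 ≤ i < j ≤ n, w_i > w_j}`. -/
noncomputable def InvSet (n : ℕ) (w : Equiv.Perm ℤ) : Finset (ℤ × ℤ) :=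
  ((Finset.Icc (1 : ℤ) (n : ℤ)) ×ˢ (Finset.Icc (1 : ℤ) (n : ℤ))).filter
    fun p => p.1 < p.2 ∧ w p.2 < w p.1

/-- The set of negative indices `Nega(w) = {i ∈ [n] : w_i < 0}`. -/
noncomputable def NegaSet (n : ℕ) (w : Equiv.Perm ℤ) : Finset ℤ :=
  (Finset.Icc (1 : ℤ) (n : ℤ)).filter fun i => w i < 0

/-- The negative sum pair set `Nsp(w) = {(i,j) : 1 ≤ i < j ≤ n, w_i + w_j < 0}`. -/
noncomputable def NspSet (n : ℕ) (w : Equiv.Perm ℤ) : Finset (ℤ × ℤ) :=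
  ((Finset.Icc (1 : ℤ) (n : ℤ)) ×ˢ (Finset.Icc (1 : ℤ) (n : ℤ))).filter
    fun p => p.1 < p.2 ∧ w p.1 + w p.2 < 0

/-- The Coxeter length of `w ∈ 𝔅ₙ`: `ℓ(w) = #Inv(w) + #Nega(w) + #Nsp(w)`. -/
noncomputable def blen (n : ℕ) (w : Equiv.Perm ℤ) : ℕ :=
  (InvSet n w).card + (NegaSet n w).card + (NspSet n w).card

/-- The left weak order on `𝔅ₙ`: `u ≤ v` iff `ℓ(v) = ℓ(u) + ℓ(v * u⁻¹)`. -/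
def wle (n : ℕ) (u v : Equiv.Perm ℤ) : Prop :=
  blen n v = blen n u + blen n (v * u⁻¹)

/-- The Coxeter generators of `𝔅ₙ`: `s₀ = (1,-1)` and `sᵢ = (i,i+1)(-i,-(i+1))` for `i ≥ 1`. -/
def sB (i : ℕ) : Equiv.Perm ℤ :=
  if i = 0 then Equiv.swap 1 (-1)
  else Equiv.swap (i : ℤ) ((i : ℤ) + 1) * Equiv.swap (-(i : ℤ)) (-((i : ℤ) + 1))

/-- `a[p] = a + p` if `a > 0`, `a - p` if `a < 0` (and `0 ↦ 0`). -/
def shiftFun (p : ℕ) (b : ℤ) : ℤ :=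
  if 0 < b then b + (p : ℤ) else if b < 0 then b - (p : ℤ) else 0

/-- `w` is the shifted product `u × v ∈ 𝔅_{p+q}` of `u ∈ 𝔅_p` and `v ∈ 𝔅_q`:
its one-line notation is `(u₁, …, u_p, v₁[p], …, v_q[p])`. -/
def IsSProd (p q : ℕ) (u v w : Equiv.Perm ℤ) : Prop :=
  w ∈ SignedPerm (p + q) ∧
  (∀ a : ℤ, 1 ≤ a → a ≤ (p : ℤ) → w a = u a) ∧
  (∀ a : ℤ, (p : ℤ) < a → a ≤ (p : ℤ) + (q : ℤ) → w a = shiftFun p (v (a - (p : ℤ))))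

/-- `ξ` is a `(p,q)`-shuffle: an element of `𝔅_{p+q}` with positive entries (a permutation)
that is increasing on each of the blocks `[1,p]` and `[p+1,p+q]`. -/
def IsShuffle (p q : ℕ) (ξ : Equiv.Perm ℤ) : Prop :=
  ξ ∈ SignedPerm (p + q) ∧
  (∀ a : ℤ, 1 ≤ a → a ≤ (p : ℤ) + (q : ℤ) → 0 < ξ a) ∧
  (∀ a b : ℤ, 1 ≤ a → a < b → b ≤ (p : ℤ) → ξ a < ξ b) ∧
  (∀ a b : ℤ, (p : ℤ) < a → a < b → b ≤ (p : ℤ) + (q : ℤ) → ξ a < ξ b)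

/-- `w` is the standard signed permutation `sts(a₁ ⋯ a_m)` of the word `a₁ ⋯ a_m = a 1, …, a m`
(of nonzero integers): the unique `w ∈ 𝔅_m` with the same negative index set and
`|w_i| < |w_j| ↔ |a_i| ≤ |a_j|` for `1 ≤ i < j ≤ m`. -/
def IsSts (m : ℕ) (a : ℤ → ℤ) (w : Equiv.Perm ℤ) : Prop :=
  w ∈ SignedPerm m ∧
  (∀ i : ℤ, 1 ≤ i → i ≤ (m : ℤ) → (w i < 0 ↔ a i < 0)) ∧
  (∀ i j : ℤ, 1 ≤ i → i < j → j ≤ (m : ℤ) → (|w i| < |w j| ↔ |a i| ≤ |a j|))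

/-- The standard signed permutation of a word, as a function. -/
noncomputable def sts (m : ℕ) (a : ℤ → ℤ) : Equiv.Perm ℤ :=
  if h : ∃ w, IsSts m a w then h.choose else 1

/-- Descent set of `w ∈ 𝔅ₙ`: `Des(w) = {i ∈ [0,n-1] : w_i > w_{i+1}}` with `w₀ = 0`
(note `w 0 = 0` holds automatically). -/
def DesSet (n : ℕ) (w : Equiv.Perm ℤ) : Finset ℕ :=
  (Finset.range n).filter fun i => w ((i : ℤ) + 1) < w (i : ℤ)

/-- Global descent set of `u ∈ 𝔅ₙ`. -/
noncomputable def GDesSet (n : ℕ) (u : Equiv.Perm ℤ) : Finset ℕ :=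
  (Finset.Ico 1 n).filter fun i =>
    ∀ j k : ℤ, 1 ≤ j → j ≤ (i : ℤ) → (i : ℤ) < k → k ≤ (n : ℤ) → u k < u j

/-- `m` is the meet (greatest lower bound) of `x` and `y` within `S`, w.r.t. the weak order. -/
def IsMeetIn (n : ℕ) (S : Set (Equiv.Perm ℤ)) (x y m : Equiv.Perm ℤ) : Prop :=
  m ∈ S ∧ wle n m x ∧ wle n m y ∧ ∀ z ∈ S, wle n z x → wle n z y → wle n z m

/-- `j` is the join (least upper bound) of `x` and `y` within `S`, w.r.t. the weak order. -/
def IsJoinIn (n : ℕ) (S : Set (Equiv.Perm ℤ)) (x y j : Equiv.Perm ℤ) : Prop :=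
  j ∈ S ∧ wle n x j ∧ wle n y j ∧ ∀ z ∈ S, wle n x z → wle n y z → wle n j z

/-- The set `𝔅_p × 𝔅_{q,K} ⊆ 𝔅_{p+q}` of shifted products `u × v` with `u ∈ 𝔅_p`,
`v ∈ 𝔅_q`, `Nega(v) = K`. -/
def SProdComp (p q : ℕ) (K : Finset ℤ) : Set (Equiv.Perm ℤ) :=
  {w | ∃ u v : Equiv.Perm ℤ, u ∈ SignedPerm p ∧ v ∈ SignedPerm q ∧ NegaSet q v = K ∧
        IsSProd p q u v w}

/-- `w` is the iterated shifted product `u⁽¹⁾ × ⋯ × u⁽ᵏ⁾` of the list `us` of signed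
permutations with block sizes given by the list `ps`. -/
def IsMultiSProd (ps : List ℕ) (us : List (Equiv.Perm ℤ)) (w : Equiv.Perm ℤ) : Prop :=
  w ∈ SignedPerm ps.sum ∧ us.length = ps.length ∧
  ∀ i < ps.length,
    us.getD i 1 ∈ SignedPerm (ps.getD i 0) ∧
    ∀ a : ℤ, ((ps.take i).sum : ℤ) < a → a ≤ ((ps.take i).sum : ℤ) + (ps.getD i 0 : ℤ) →
      w a = shiftFun ((ps.take i).sum) ((us.getD i 1) (a - ((ps.take i).sum : ℤ)))

/-- The subset `𝔅_{p₁} × 𝔅_{p₂} × ⋯ × 𝔅_{p_k}` of `𝔅_{p₁+⋯+p_k}`. -/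
def MultiProdSet (ps : List ℕ) : Set (Equiv.Perm ℤ) :=
  {w | ∃ us, IsMultiSProd ps us w}

/-- The `(L₂,…,L_k)`-component `𝔅_{p₁} × 𝔅_{p₂,L₂} × ⋯ × 𝔅_{p_k,L_k}`, where
`Ls.getD (i-1) ∅` is the prescribed negative index set of the `(i+1)`-st factor. -/
def ComponentSet (ps : List ℕ) (Ls : List (Finset ℤ)) : Set (Equiv.Perm ℤ) :=
  {w | ∃ us, IsMultiSProd ps us w ∧
        ∀ i, 1 ≤ i → i < ps.length →
          NegaSet (ps.getD i 0) (us.getD i 1) = Ls.getD (i - 1) ∅}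

/-- `ξ ∈ Sh(p₁,…,p_k)`: a permutation in `𝔅_{p₁+⋯+p_k}` (all entries positive)
increasing on each consecutive block. -/
def IsMultiShuffle (ps : List ℕ) (ξ : Equiv.Perm ℤ) : Prop :=
  ξ ∈ SignedPerm ps.sum ∧
  (∀ a : ℤ, 1 ≤ a → a ≤ (ps.sum : ℤ) → 0 < ξ a) ∧
  ∀ i < ps.length, ∀ a b : ℤ,
    ((ps.take i).sum : ℤ) < a → a < b → b ≤ ((ps.take i).sum : ℤ) + (ps.getD i 0 : ℤ) →
      ξ a < ξ b

/-- `ξ · S` for a set of indices: `{ξ_r : r ∈ S}`. -/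
def idxImg (ξ : Equiv.Perm ℤ) (S : Finset ℤ) : Finset ℤ := S.image fun r => ξ r

/-- `p + S = {p + r : r ∈ S}`. -/
def shiftIdx (p : ℕ) (S : Finset ℤ) : Finset ℤ := S.image fun r => r + (p : ℤ)

/-- `ξ · S` for a set of pairs: `{(ξ_r, ξ_s) : (r,s) ∈ S}`. -/
def prImg (ξ : Equiv.Perm ℤ) (S : Finset (ℤ × ℤ)) : Finset (ℤ × ℤ) :=
  S.image fun rs => (ξ rs.1, ξ rs.2)

/-- `(p,p) + S = {(p+r, p+s) : (r,s) ∈ S}`. -/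
def shiftPr (p : ℕ) (S : Finset (ℤ × ℤ)) : Finset (ℤ × ℤ) :=
  S.image fun rs => (rs.1 + (p : ℤ), rs.2 + (p : ℤ))

/-- `Inv̄(w) = {(i,j) : 1 ≤ i < j ≤ n, (i,j) ∉ Inv(w)}`. -/
noncomputable def OInvSet (n : ℕ) (w : Equiv.Perm ℤ) : Finset (ℤ × ℤ) :=
  ((Finset.Icc (1 : ℤ) (n : ℤ)) ×ˢ (Finset.Icc (1 : ℤ) (n : ℤ))).filter
    fun rs => rs.1 < rs.2 ∧ rs ∉ InvSet n w

/-- `Ĩnv(w) = {(j,i) : (i,j) ∈ Inv(w)}`. -/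
noncomputable def TInvSet (n : ℕ) (w : Equiv.Perm ℤ) : Finset (ℤ × ℤ) :=
  (InvSet n w).image Prod.swap

/-- `Nega̅(w) = [n] ∖ Nega(w)`. -/
noncomputable def NegaBar (n : ℕ) (w : Equiv.Perm ℤ) : Finset ℤ :=
  Finset.Icc (1 : ℤ) (n : ℤ) \ NegaSet n w

section AuxLemmas

theorem Equiv.Perm.apply_inv_self {α : Type*} (f : Equiv.Perm α) (x : α) : f (f⁻¹ x) = x :=
  f.apply_symm_apply x

theorem Equiv.Perm.inv_apply_self {α : Type*} (f : Equiv.Perm α) (x : α) : f⁻¹ (f x) = x :=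
  f.symm_apply_apply x

lemma sp_zero {n : ℕ} {w : Equiv.Perm ℤ} (h : w ∈ SignedPerm n) : w 0 = 0 := by
  have h1 := h.1 0
  simp only [neg_zero] at h1
  omega

lemma sp_bound {n : ℕ} {w : Equiv.Perm ℤ} (h : w ∈ SignedPerm n) {i : ℤ}
    (h1 : -(n : ℤ) ≤ i) (h2 : i ≤ (n : ℤ)) : -(n : ℤ) ≤ w i ∧ w i ≤ (n : ℤ) := by
  by_contra hc
  push_neg at hc
  have hn : (0:ℤ) ≤ (n:ℤ) := Int.natCast_nonneg n
  have habs : (n : ℤ) < |w i| := by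
    rcases lt_or_ge (w i) 0 with h' | h'
    · rw [abs_of_neg h']
      rcases le_or_gt (-(n:ℤ)) (w i) with h'' | h''
      · have := hc h''; omega
      · omega
    · rw [abs_of_nonneg h']
      rcases le_or_gt (-(n:ℤ)) (w i) with h'' | h''
      · exact hc h''
      · omega
  have h3 : w (w i) = w i := h.2 _ habs
  have h4 : w i = i := w.injective h3
  rcases abs_cases (w i) with ⟨he, _⟩ | ⟨he, _⟩ <;> omega

lemma sp_ne_zero {n : ℕ} {w : Equiv.Perm ℤ} (h : w ∈ SignedPerm n) {i : ℤ} (hi : i ≠ 0) :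
    w i ≠ 0 := by
  intro hc
  exact hi (w.injective (hc.trans (sp_zero h).symm))

lemma sp_inv {n : ℕ} {w : Equiv.Perm ℤ} (h : w ∈ SignedPerm n) : w⁻¹ ∈ SignedPerm n := by
  constructor
  · intro i
    apply w.injective
    rw [Equiv.Perm.apply_inv_self, h.1, Equiv.Perm.apply_inv_self]
  · intro i hi
    have h2 := h.2 i hi
    calc w⁻¹ i = w⁻¹ (w i) := by rw [h2]
    _ = i := Equiv.Perm.inv_apply_self w i

lemma shiftFun_neg_iff {p : ℕ} {y : ℤ} (hy : y ≠ 0) : shiftFun p y < 0 ↔ y < 0 := by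
  unfold shiftFun; split_ifs <;> omega

lemma shiftFun_lt_iff {p : ℕ} {x y : ℤ} (hx : x ≠ 0) (hy : y ≠ 0) :
    shiftFun p x < shiftFun p y ↔ x < y := by
  unfold shiftFun; split_ifs <;> omega

lemma shiftFun_add_neg_iff {p : ℕ} {x y : ℤ} (hx : x ≠ 0) (hy : y ≠ 0) :
    shiftFun p x + shiftFun p y < 0 ↔ x + y < 0 := by
  unfold shiftFun; split_ifs <;> omega

lemma shiftFun_lt_left {p : ℕ} {a y : ℤ} (ha1 : -(p:ℤ) ≤ a) (ha2 : a ≤ (p:ℤ)) (hy : y ≠ 0) :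
    shiftFun p y < a ↔ y < 0 := by
  unfold shiftFun; split_ifs <;> omega

lemma shiftFun_gt_left {p : ℕ} {a y : ℤ} (ha1 : -(p:ℤ) ≤ a) (ha2 : a ≤ (p:ℤ)) (hy : y ≠ 0) :
    a < shiftFun p y ↔ 0 < y := by
  unfold shiftFun; split_ifs <;> omega

lemma shiftFun_add_left {p : ℕ} {a y : ℤ} (ha1 : -(p:ℤ) ≤ a) (ha2 : a ≤ (p:ℤ)) (hy : y ≠ 0) :
    a + shiftFun p y < 0 ↔ y < 0 := by
  unfold shiftFun; split_ifs <;> omega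

lemma mem_InvSet {n : ℕ} {w : Equiv.Perm ℤ} {i j : ℤ} :
    (i, j) ∈ InvSet n w ↔ (1 ≤ i ∧ i ≤ (n:ℤ)) ∧ (1 ≤ j ∧ j ≤ (n:ℤ)) ∧ i < j ∧ w j < w i := by
  unfold InvSet
  simp only [Finset.mem_filter, Finset.mem_product, Finset.mem_Icc]
  tauto

lemma mem_NspSet {n : ℕ} {w : Equiv.Perm ℤ} {i j : ℤ} :
    (i, j) ∈ NspSet n w ↔ (1 ≤ i ∧ i ≤ (n:ℤ)) ∧ (1 ≤ j ∧ j ≤ (n:ℤ)) ∧ i < j ∧ w i + w j < 0 := by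
  unfold NspSet
  simp only [Finset.mem_filter, Finset.mem_product, Finset.mem_Icc]
  tauto

lemma mem_NegaSet {n : ℕ} {w : Equiv.Perm ℤ} {i : ℤ} :
    i ∈ NegaSet n w ↔ (1 ≤ i ∧ i ≤ (n:ℤ)) ∧ w i < 0 := by
  unfold NegaSet
  simp only [Finset.mem_filter, Finset.mem_Icc]

lemma mem_OInvSet {n : ℕ} {w : Equiv.Perm ℤ} {i j : ℤ} :
    (i, j) ∈ OInvSet n w ↔
      (1 ≤ i ∧ i ≤ (n:ℤ)) ∧ (1 ≤ j ∧ j ≤ (n:ℤ)) ∧ i < j ∧ ¬ w j < w i := by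
  unfold OInvSet
  simp only [Finset.mem_filter, Finset.mem_product, Finset.mem_Icc, mem_InvSet]
  tauto

lemma mem_TInvSet {n : ℕ} {w : Equiv.Perm ℤ} {i j : ℤ} :
    (i, j) ∈ TInvSet n w ↔ (j, i) ∈ InvSet n w := by
  unfold TInvSet
  rw [Finset.mem_image]
  constructor
  · rintro ⟨⟨a, b⟩, ha, hab⟩
    have h1 : b = i := congrArg Prod.fst hab
    have h2 : a = j := congrArg Prod.snd hab
    rwa [h1, h2] at ha
  · intro h
    exact ⟨(j, i), h, rfl⟩

lemma mem_NegaBar {n : ℕ} {w : Equiv.Perm ℤ} {t : ℤ} :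
    t ∈ NegaBar n w ↔ (1 ≤ t ∧ t ≤ (n:ℤ)) ∧ ¬ w t < 0 := by
  unfold NegaBar
  simp only [Finset.mem_sdiff, Finset.mem_Icc, mem_NegaSet]
  tauto

lemma mem_idxImg {ξ : Equiv.Perm ℤ} {S : Finset ℤ} {i : ℤ} :
    i ∈ idxImg ξ S ↔ ∃ r ∈ S, ξ r = i := Finset.mem_image

lemma mem_shiftIdx {p : ℕ} {S : Finset ℤ} {i : ℤ} :
    i ∈ shiftIdx p S ↔ ∃ t ∈ S, t + (p:ℤ) = i := Finset.mem_image

lemma mem_prImg {ξ : Equiv.Perm ℤ} {S : Finset (ℤ × ℤ)} {i j : ℤ} :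
    (i, j) ∈ prImg ξ S ↔ ∃ r s, (r, s) ∈ S ∧ ξ r = i ∧ ξ s = j := by
  unfold prImg
  rw [Finset.mem_image]
  constructor
  · rintro ⟨⟨r, s⟩, h, hab⟩
    exact ⟨r, s, h, congrArg Prod.fst hab, congrArg Prod.snd hab⟩
  · rintro ⟨r, s, h, h1, h2⟩
    exact ⟨(r, s), h, by rw [← h1, ← h2]⟩

lemma mem_shiftPr {p : ℕ} {S : Finset (ℤ × ℤ)} {i j : ℤ} :
    (i, j) ∈ shiftPr p S ↔ ∃ r s, (r, s) ∈ S ∧ r + (p:ℤ) = i ∧ s + (p:ℤ) = j := by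
  unfold shiftPr
  rw [Finset.mem_image]
  constructor
  · rintro ⟨⟨r, s⟩, h, hab⟩
    exact ⟨r, s, h, congrArg Prod.fst hab, congrArg Prod.snd hab⟩
  · rintro ⟨r, s, h, h1, h2⟩
    exact ⟨(r, s), h, by rw [← h1, ← h2]⟩

lemma disjoint_idxImg {ξ : Equiv.Perm ℤ} {A B : Finset ℤ} (h : Disjoint A B) :
    Disjoint (idxImg ξ A) (idxImg ξ B) := by
  rw [Finset.disjoint_left] at h ⊢
  rintro x hxA hxB
  obtain ⟨a, ha, rfl⟩ := Finset.mem_image.mp hxA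
  obtain ⟨b, hb, hba⟩ := Finset.mem_image.mp hxB
  have hba' : b = a := ξ.injective hba
  exact h ha (hba' ▸ hb)

lemma disjoint_prImg {ξ : Equiv.Perm ℤ} {A B : Finset (ℤ × ℤ)} (h : Disjoint A B) :
    Disjoint (prImg ξ A) (prImg ξ B) := by
  rw [Finset.disjoint_left] at h ⊢
  rintro x hxA hxB
  obtain ⟨a, ha, rfl⟩ := Finset.mem_image.mp hxA
  obtain ⟨b, hb, hba⟩ := Finset.mem_image.mp hxB
  have h1 : ξ b.1 = ξ a.1 := congrArg Prod.fst hba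
  have h2 : ξ b.2 = ξ a.2 := congrArg Prod.snd hba
  have hba' : b = a := Prod.ext (ξ.injective h1) (ξ.injective h2)
  exact h ha (hba' ▸ hb)

end AuxLemmas

/-- Disjoint-union descriptions of `Nega`, `Inv` and `Nsp` of
`w = (u × v) ξ⁻¹` for a `(p,q)`-shuffle `ξ`, `u ∈ 𝔅_p`, `v ∈ 𝔅_q`. -/
theorem inv_nega_nsp_of_shuffled_sprod (p q : ℕ) (ξ u v z w : Equiv.Perm ℤ)
    (hξ : IsShuffle p q ξ) (hu : u ∈ SignedPerm p) (hv : v ∈ SignedPerm q)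
    (hz : IsSProd p q u v z) (hw : w = z * ξ⁻¹) :
    let N1 := idxImg ξ (NegaSet p u)
    let N2 := idxImg ξ (shiftIdx p (NegaSet q v))
    let I1 := prImg ξ (InvSet p u)
    let I2 := prImg ξ (shiftPr p (InvSet q v))
    let I3 := prImg ξ
      (((Finset.Icc (1 : ℤ) (p : ℤ)) ×ˢ shiftIdx p (NegaSet q v)) ∩ OInvSet (p + q) ξ)
    let I4 := prImg ξ
      ((shiftIdx p (NegaBar q v) ×ˢ (Finset.Icc (1 : ℤ) (p : ℤ))) ∩ TInvSet (p + q) ξ)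
    let S1 := prImg ξ (NspSet p u)
    let S2 := prImg ξ (shiftPr p (NspSet q v))
    let S4 := prImg ξ
      ((shiftIdx p (NegaSet q v) ×ˢ (Finset.Icc (1 : ℤ) (p : ℤ))) ∩ TInvSet (p + q) ξ)
    (NegaSet (p + q) w = N1 ∪ N2 ∧ Disjoint N1 N2) ∧
    (InvSet (p + q) w = I1 ∪ I2 ∪ I3 ∪ I4 ∧
      Disjoint I1 I2 ∧ Disjoint I1 I3 ∧ Disjoint I1 I4 ∧
      Disjoint I2 I3 ∧ Disjoint I2 I4 ∧ Disjoint I3 I4) ∧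
    (NspSet (p + q) w = S1 ∪ S2 ∪ I3 ∪ S4 ∧
      Disjoint S1 S2 ∧ Disjoint S1 I3 ∧ Disjoint S1 S4 ∧
      Disjoint S2 I3 ∧ Disjoint S2 S4 ∧ Disjoint I3 S4) := by
  intro N1 N2 I1 I2 I3 I4 S1 S2 S4
  have hup : ∀ r : ℤ, 1 ≤ r → r ≤ (p:ℤ) → -(p:ℤ) ≤ u r ∧ u r ≤ (p:ℤ) ∧ u r ≠ 0 := by
    intro r h1 h2
    have hb := sp_bound hu (i := r) (by omega) h2
    exact ⟨hb.1, hb.2, sp_ne_zero hu (by omega)⟩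
  have hvq : ∀ t : ℤ, 1 ≤ t → t ≤ (q:ℤ) → -(q:ℤ) ≤ v t ∧ v t ≤ (q:ℤ) ∧ v t ≠ 0 := by
    intro t h1 h2
    have hb := sp_bound hv (i := t) (by omega) h2
    exact ⟨hb.1, hb.2, sp_ne_zero hv (by omega)⟩
  have hξrange : ∀ r : ℤ, 1 ≤ r → r ≤ (p:ℤ)+(q:ℤ) → 1 ≤ ξ r ∧ ξ r ≤ (p:ℤ)+(q:ℤ) := by
    intro r h1 h2
    have hb := sp_bound hξ.1 (i := r) (by push_cast; omega) (by push_cast; omega)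
    have hp := hξ.2.1 r h1 h2
    push_cast at hb
    omega
  have hξsurj : ∀ i : ℤ, 1 ≤ i → i ≤ (p:ℤ)+(q:ℤ) →
      ∃ r, (1 ≤ r ∧ r ≤ (p:ℤ)+(q:ℤ)) ∧ ξ r = i := by
    intro i h1 h2
    have hinv := sp_inv hξ.1
    have hb := sp_bound hinv (i := i) (by push_cast; omega) (by push_cast; omega)
    push_cast at hb
    refine ⟨ξ⁻¹ i, ⟨?_, by omega⟩, ξ.apply_inv_self i⟩
    by_contra hc
    push_neg at hc
    rcases eq_or_lt_of_le (by omega : ξ⁻¹ i ≤ 0) with h0 | hneg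
    · have h3 : ξ (ξ⁻¹ i) = 0 := by rw [h0]; exact sp_zero hξ.1
      rw [ξ.apply_inv_self] at h3
      omega
    · have hpos := hξ.2.1 (-(ξ⁻¹ i)) (by omega) (by omega)
      have h3 : ξ (-(ξ⁻¹ i)) = -i := by rw [hξ.1.1, ξ.apply_inv_self]
      omega
  have hw1 : ∀ r : ℤ, 1 ≤ r → r ≤ (p:ℤ) → w (ξ r) = u r := by
    intro r h1 h2
    rw [hw]
    simp only [Equiv.Perm.mul_apply]
    rw [Equiv.Perm.inv_apply_self]
    exact hz.2.1 r h1 h2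
  have hw2 : ∀ r : ℤ, (p:ℤ) < r → r ≤ (p:ℤ)+(q:ℤ) → w (ξ r) = shiftFun p (v (r - (p:ℤ))) := by
    intro r h1 h2
    rw [hw]
    simp only [Equiv.Perm.mul_apply]
    rw [Equiv.Perm.inv_apply_self]
    exact hz.2.2 r h1 h2
  have hmono1 : ∀ r s : ℤ, 1 ≤ r → r ≤ (p:ℤ) → 1 ≤ s → s ≤ (p:ℤ) → (ξ r < ξ s ↔ r < s) := by
    intro r s hr1 hr2 hs1 hs2
    constructor
    · intro h
      by_contra hc
      push_neg at hc
      rcases eq_or_lt_of_le hc with he | hl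
      · rw [he] at h; omega
      · have := hξ.2.2.1 s r hs1 hl hr2; omega
    · exact fun h => hξ.2.2.1 r s hr1 h hs2
  have hmono2 : ∀ r s : ℤ, (p:ℤ) < r → r ≤ (p:ℤ)+(q:ℤ) → (p:ℤ) < s → s ≤ (p:ℤ)+(q:ℤ) →
      (ξ r < ξ s ↔ r < s) := by
    intro r s hr1 hr2 hs1 hs2
    constructor
    · intro h
      by_contra hc
      push_neg at hc
      rcases eq_or_lt_of_le hc with he | hl
      · rw [he] at h; omega
      · have := hξ.2.2.2 s r hs1 hl hr2; omega
    · exact fun h => hξ.2.2.2 r s hr1 h hs2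
  refine ⟨⟨?_, ?_⟩, ⟨?_, ?_, ?_, ?_, ?_, ?_, ?_⟩, ⟨?_, ?_, ?_, ?_, ?_, ?_, ?_⟩⟩
  · -- Nega equality
    show NegaSet (p + q) w = idxImg ξ (NegaSet p u) ∪ idxImg ξ (shiftIdx p (NegaSet q v))
    ext i
    rw [Finset.mem_union, mem_NegaSet]
    constructor
    · rintro ⟨⟨hi1, hi2⟩, hwi⟩
      obtain ⟨r, ⟨hr1, hr2⟩, rfl⟩ := hξsurj i hi1 (by push_cast at hi2; omega)
      by_cases hrp : r ≤ (p:ℤ)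
      · left
        exact mem_idxImg.mpr ⟨r, mem_NegaSet.mpr ⟨⟨hr1, hrp⟩, by rwa [← hw1 r hr1 hrp]⟩, rfl⟩
      · right
        push_neg at hrp
        have hvt := hvq (r - (p:ℤ)) (by omega) (by omega)
        have hneg : v (r - (p:ℤ)) < 0 := by
          rw [hw2 r hrp hr2] at hwi
          exact (shiftFun_neg_iff hvt.2.2).mp hwi
        exact mem_idxImg.mpr ⟨r, mem_shiftIdx.mpr ⟨r - (p:ℤ),
          mem_NegaSet.mpr ⟨⟨by omega, by omega⟩, hneg⟩, by omega⟩, rfl⟩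
    · rintro (h | h)
      · obtain ⟨r, hr, rfl⟩ := mem_idxImg.mp h
        obtain ⟨⟨hr1, hr2⟩, hur⟩ := mem_NegaSet.mp hr
        have hb := hξrange r hr1 (by omega)
        exact ⟨⟨hb.1, by push_cast; omega⟩, by rw [hw1 r hr1 hr2]; exact hur⟩
      · obtain ⟨r, hr, rfl⟩ := mem_idxImg.mp h
        obtain ⟨t, ht, hteq⟩ := mem_shiftIdx.mp hr
        obtain ⟨⟨ht1, ht2⟩, hvt⟩ := mem_NegaSet.mp ht
        have hb := hξrange r (by omega) (by omega)
        refine ⟨⟨hb.1, by push_cast; omega⟩, ?_⟩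
        have hteq' : r - (p:ℤ) = t := by omega
        rw [hw2 r (by omega) (by omega), hteq']
        exact (shiftFun_neg_iff (hvq t ht1 ht2).2.2).mpr hvt
  · -- Disjoint N1 N2
    refine disjoint_idxImg (Finset.disjoint_left.mpr ?_)
    intro a ha hb
    have h1 := (mem_NegaSet.mp ha).1
    obtain ⟨t, ht, hta⟩ := mem_shiftIdx.mp hb
    have h2 := (mem_NegaSet.mp ht).1
    omega
  · -- Inv equality
    show InvSet (p + q) w = prImg ξ (InvSet p u) ∪ prImg ξ (shiftPr p (InvSet q v)) ∪
      prImg ξ (((Finset.Icc (1 : ℤ) (p : ℤ)) ×ˢ shiftIdx p (NegaSet q v)) ∩ OInvSet (p + q) ξ) ∪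
      prImg ξ ((shiftIdx p (NegaBar q v) ×ˢ (Finset.Icc (1 : ℤ) (p : ℤ))) ∩ TInvSet (p + q) ξ)
    ext ⟨i, j⟩
    constructor
    · intro hx
      obtain ⟨⟨hi1, hi2⟩, ⟨hj1, hj2⟩, hij, hwij⟩ := mem_InvSet.mp hx
      push_cast at hi2 hj2
      obtain ⟨r, ⟨hr1, hr2⟩, rfl⟩ := hξsurj i hi1 (by omega)
      obtain ⟨s, ⟨hs1, hs2⟩, rfl⟩ := hξsurj j hj1 (by omega)
      by_cases hrp : r ≤ (p:ℤ) <;> by_cases hsp : s ≤ (p:ℤ)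
      · -- both ≤ p : I1
        have hrs : r < s := (hmono1 r s hr1 hrp hs1 hsp).mp hij
        have hval : u s < u r := by rwa [hw1 r hr1 hrp, hw1 s hs1 hsp] at hwij
        exact Finset.mem_union_left _ (Finset.mem_union_left _ (Finset.mem_union_left _
          (mem_prImg.mpr ⟨r, s, mem_InvSet.mpr ⟨⟨hr1, hrp⟩, ⟨hs1, hsp⟩, hrs, hval⟩, rfl, rfl⟩)))
      · -- r ≤ p < s : I3
        push_neg at hsp
        have hvt := hvq (s - (p:ℤ)) (by omega) (by omega)
        have hur := hup r hr1 hrp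
        have hvneg : v (s - (p:ℤ)) < 0 := by
          rw [hw1 r hr1 hrp, hw2 s hsp hs2] at hwij
          exact (shiftFun_lt_left hur.1 hur.2.1 hvt.2.2).mp hwij
        refine Finset.mem_union_left _ (Finset.mem_union_right _ ?_)
        refine mem_prImg.mpr ⟨r, s, Finset.mem_inter.mpr ⟨Finset.mem_product.mpr
          ⟨Finset.mem_Icc.mpr ⟨hr1, hrp⟩, mem_shiftIdx.mpr ⟨s - (p:ℤ),
            mem_NegaSet.mpr ⟨⟨by omega, by omega⟩, hvneg⟩, by omega⟩⟩,
          mem_OInvSet.mpr ⟨⟨by omega, by push_cast; omega⟩, ⟨by omega, by push_cast; omega⟩,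
            by omega, by omega⟩⟩, rfl, rfl⟩
      · -- s ≤ p < r : I4
        push_neg at hrp
        have hvt := hvq (r - (p:ℤ)) (by omega) (by omega)
        have hus := hup s hs1 hsp
        have hvpos : 0 < v (r - (p:ℤ)) := by
          rw [hw1 s hs1 hsp, hw2 r hrp hr2] at hwij
          exact (shiftFun_gt_left hus.1 hus.2.1 hvt.2.2).mp hwij
        refine Finset.mem_union_right _ ?_
        refine mem_prImg.mpr ⟨r, s, Finset.mem_inter.mpr ⟨Finset.mem_product.mpr
          ⟨mem_shiftIdx.mpr ⟨r - (p:ℤ),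
            mem_NegaBar.mpr ⟨⟨by omega, by omega⟩, by omega⟩, by omega⟩,
            Finset.mem_Icc.mpr ⟨hs1, hsp⟩⟩,
          mem_TInvSet.mpr (mem_InvSet.mpr ⟨⟨by omega, by push_cast; omega⟩,
            ⟨by omega, by push_cast; omega⟩, by omega, hij⟩)⟩, rfl, rfl⟩
      · -- both > p : I2
        push_neg at hrp hsp
        have hrs : r < s := (hmono2 r s hrp hr2 hsp hs2).mp hij
        have hvr := hvq (r - (p:ℤ)) (by omega) (by omega)
        have hvs := hvq (s - (p:ℤ)) (by omega) (by omega)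
        have hval : v (s - (p:ℤ)) < v (r - (p:ℤ)) := by
          rw [hw2 r hrp hr2, hw2 s hsp hs2] at hwij
          exact (shiftFun_lt_iff hvs.2.2 hvr.2.2).mp hwij
        refine Finset.mem_union_left _ (Finset.mem_union_left _ (Finset.mem_union_right _ ?_))
        refine mem_prImg.mpr ⟨r, s, mem_shiftPr.mpr ⟨r - (p:ℤ), s - (p:ℤ),
          mem_InvSet.mpr ⟨⟨by omega, by omega⟩, ⟨by omega, by omega⟩, by omega, hval⟩,
          by omega, by omega⟩, rfl, rfl⟩
    · intro hx
      rcases Finset.mem_union.mp hx with hx | hx4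
      · rcases Finset.mem_union.mp hx with hx | hx3
        · rcases Finset.mem_union.mp hx with hx1 | hx2
          · -- I1
            obtain ⟨r, s, hrs, rfl, rfl⟩ := mem_prImg.mp hx1
            obtain ⟨⟨hr1, hr2⟩, ⟨hs1, hs2⟩, hlt, hval⟩ := mem_InvSet.mp hrs
            have hbr := hξrange r hr1 (by omega)
            have hbs := hξrange s hs1 (by omega)
            refine mem_InvSet.mpr ⟨⟨hbr.1, by push_cast; omega⟩, ⟨hbs.1, by push_cast; omega⟩,
              (hmono1 r s hr1 hr2 hs1 hs2).mpr hlt, ?_⟩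
            rw [hw1 r hr1 hr2, hw1 s hs1 hs2]
            exact hval
          · -- I2
            obtain ⟨r, s, hrs, rfl, rfl⟩ := mem_prImg.mp hx2
            obtain ⟨a, b, hab, ha, hb⟩ := mem_shiftPr.mp hrs
            obtain ⟨⟨ha1, ha2⟩, ⟨hb1, hb2⟩, hlt, hval⟩ := mem_InvSet.mp hab
            have hbr := hξrange r (by omega) (by omega)
            have hbs := hξrange s (by omega) (by omega)
            have har : r - (p:ℤ) = a := by omega
            have hbs' : s - (p:ℤ) = b := by omega
            refine mem_InvSet.mpr ⟨⟨hbr.1, by push_cast; omega⟩, ⟨hbs.1, by push_cast; omega⟩,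
              (hmono2 r s (by omega) (by omega) (by omega) (by omega)).mpr (by omega), ?_⟩
            rw [hw2 r (by omega) (by omega), hw2 s (by omega) (by omega), har, hbs']
            exact (shiftFun_lt_iff (hvq b hb1 hb2).2.2 (hvq a ha1 ha2).2.2).mpr hval
        · -- I3
          obtain ⟨r, s, hrs, rfl, rfl⟩ := mem_prImg.mp hx3
          obtain ⟨hprod, hoinv⟩ := Finset.mem_inter.mp hrs
          obtain ⟨hrIcc, hsShift⟩ := Finset.mem_product.mp hprod
          obtain ⟨hr1, hr2⟩ := Finset.mem_Icc.mp hrIcc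
          obtain ⟨t, ht, hteq⟩ := mem_shiftIdx.mp hsShift
          obtain ⟨⟨ht1, ht2⟩, hvt⟩ := mem_NegaSet.mp ht
          obtain ⟨⟨_, _⟩, ⟨_, hsb⟩, hlt, hnlt⟩ := mem_OInvSet.mp hoinv
          push_cast at hsb
          have hξlt : ξ r < ξ s := by
            rcases lt_trichotomy (ξ r) (ξ s) with h | h | h
            · exact h
            · exact absurd (ξ.injective h) (by omega)
            · exact absurd h hnlt
          have hbr := hξrange r hr1 (by omega)
          have hbs := hξrange s (by omega) (by omega)
          have hur := hup r hr1 hr2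
          refine mem_InvSet.mpr ⟨⟨hbr.1, by push_cast; omega⟩, ⟨hbs.1, by push_cast; omega⟩,
            hξlt, ?_⟩
          have hteq' : s - (p:ℤ) = t := by omega
          rw [hw1 r hr1 hr2, hw2 s (by omega) (by omega), hteq']
          exact (shiftFun_lt_left hur.1 hur.2.1 (hvq t ht1 ht2).2.2).mpr hvt
      · -- I4
        obtain ⟨r, s, hrs, rfl, rfl⟩ := mem_prImg.mp hx4
        obtain ⟨hprod, htinv⟩ := Finset.mem_inter.mp hrs
        obtain ⟨hrShift, hsIcc⟩ := Finset.mem_product.mp hprod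
        obtain ⟨hs1, hs2⟩ := Finset.mem_Icc.mp hsIcc
        obtain ⟨t, ht, hteq⟩ := mem_shiftIdx.mp hrShift
        obtain ⟨⟨ht1, ht2⟩, hvt⟩ := mem_NegaBar.mp ht
        obtain ⟨⟨_, _⟩, ⟨_, hrb⟩, hlt, hξlt⟩ := mem_InvSet.mp (mem_TInvSet.mp htinv)
        push_cast at hrb
        have hbr := hξrange r (by omega) (by omega)
        have hbs := hξrange s hs1 (by omega)
        have hus := hup s hs1 hs2
        have hvtt := hvq t ht1 ht2
        refine mem_InvSet.mpr ⟨⟨hbr.1, by push_cast; omega⟩, ⟨hbs.1, by push_cast; omega⟩,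
          hξlt, ?_⟩
        have hteq' : r - (p:ℤ) = t := by omega
        rw [hw1 s hs1 hs2, hw2 r (by omega) (by omega), hteq']
        exact (shiftFun_gt_left hus.1 hus.2.1 hvtt.2.2).mpr (by omega)
  · exact disjoint_prImg (Finset.disjoint_left.mpr fun a ha hb => by
      have h1 := (mem_InvSet.mp ha).1
      obtain ⟨r, s, hrs, hra, hsa⟩ := mem_shiftPr.mp hb
      have h2 := (mem_InvSet.mp hrs).1
      omega)
  · exact disjoint_prImg (Finset.disjoint_left.mpr fun a ha hb => by
      have h1 := (mem_InvSet.mp ha).2.1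
      obtain ⟨hprod, _⟩ := Finset.mem_inter.mp hb
      obtain ⟨_, hsShift⟩ := Finset.mem_product.mp hprod
      obtain ⟨t, ht, hteq⟩ := mem_shiftIdx.mp hsShift
      have h2 := (mem_NegaSet.mp ht).1
      omega)
  · exact disjoint_prImg (Finset.disjoint_left.mpr fun a ha hb => by
      have h1 := (mem_InvSet.mp ha).1
      obtain ⟨hprod, _⟩ := Finset.mem_inter.mp hb
      obtain ⟨hrShift, _⟩ := Finset.mem_product.mp hprod
      obtain ⟨t, ht, hteq⟩ := mem_shiftIdx.mp hrShift
      have h2 := (mem_NegaBar.mp ht).1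
      omega)
  · exact disjoint_prImg (Finset.disjoint_left.mpr fun a ha hb => by
      obtain ⟨r, s, hrs, hra, hsa⟩ := mem_shiftPr.mp ha
      have h1 := (mem_InvSet.mp hrs).1
      obtain ⟨hprod, _⟩ := Finset.mem_inter.mp hb
      obtain ⟨hrIcc, _⟩ := Finset.mem_product.mp hprod
      have h2 := Finset.mem_Icc.mp hrIcc
      omega)
  · exact disjoint_prImg (Finset.disjoint_left.mpr fun a ha hb => by
      obtain ⟨r, s, hrs, hra, hsa⟩ := mem_shiftPr.mp ha
      have h1 := (mem_InvSet.mp hrs).2.1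
      obtain ⟨hprod, _⟩ := Finset.mem_inter.mp hb
      obtain ⟨_, hsIcc⟩ := Finset.mem_product.mp hprod
      have h2 := Finset.mem_Icc.mp hsIcc
      omega)
  · exact disjoint_prImg (Finset.disjoint_left.mpr fun a ha hb => by
      obtain ⟨hprod, _⟩ := Finset.mem_inter.mp ha
      obtain ⟨hrIcc, _⟩ := Finset.mem_product.mp hprod
      have h1 := Finset.mem_Icc.mp hrIcc
      obtain ⟨hprod', _⟩ := Finset.mem_inter.mp hb
      obtain ⟨hrShift, _⟩ := Finset.mem_product.mp hprod'
      obtain ⟨t, ht, hteq⟩ := mem_shiftIdx.mp hrShift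
      have h2 := (mem_NegaBar.mp ht).1
      omega)
  · -- Nsp equality
    show NspSet (p + q) w = prImg ξ (NspSet p u) ∪ prImg ξ (shiftPr p (NspSet q v)) ∪
      prImg ξ (((Finset.Icc (1 : ℤ) (p : ℤ)) ×ˢ shiftIdx p (NegaSet q v)) ∩ OInvSet (p + q) ξ) ∪
      prImg ξ ((shiftIdx p (NegaSet q v) ×ˢ (Finset.Icc (1 : ℤ) (p : ℤ))) ∩ TInvSet (p + q) ξ)
    ext ⟨i, j⟩
    constructor
    · intro hx
      obtain ⟨⟨hi1, hi2⟩, ⟨hj1, hj2⟩, hij, hwij⟩ := mem_NspSet.mp hx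
      push_cast at hi2 hj2
      obtain ⟨r, ⟨hr1, hr2⟩, rfl⟩ := hξsurj i hi1 (by omega)
      obtain ⟨s, ⟨hs1, hs2⟩, rfl⟩ := hξsurj j hj1 (by omega)
      by_cases hrp : r ≤ (p:ℤ) <;> by_cases hsp : s ≤ (p:ℤ)
      · -- both ≤ p : S1
        have hrs : r < s := (hmono1 r s hr1 hrp hs1 hsp).mp hij
        have hval : u r + u s < 0 := by rwa [hw1 r hr1 hrp, hw1 s hs1 hsp] at hwij
        exact Finset.mem_union_left _ (Finset.mem_union_left _ (Finset.mem_union_left _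
          (mem_prImg.mpr ⟨r, s, mem_NspSet.mpr ⟨⟨hr1, hrp⟩, ⟨hs1, hsp⟩, hrs, hval⟩, rfl, rfl⟩)))
      · -- r ≤ p < s : I3
        push_neg at hsp
        have hvt := hvq (s - (p:ℤ)) (by omega) (by omega)
        have hur := hup r hr1 hrp
        have hvneg : v (s - (p:ℤ)) < 0 := by
          rw [hw1 r hr1 hrp, hw2 s hsp hs2] at hwij
          exact (shiftFun_add_left hur.1 hur.2.1 hvt.2.2).mp hwij
        refine Finset.mem_union_left _ (Finset.mem_union_right _ ?_)
        refine mem_prImg.mpr ⟨r, s, Finset.mem_inter.mpr ⟨Finset.mem_product.mpr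
          ⟨Finset.mem_Icc.mpr ⟨hr1, hrp⟩, mem_shiftIdx.mpr ⟨s - (p:ℤ),
            mem_NegaSet.mpr ⟨⟨by omega, by omega⟩, hvneg⟩, by omega⟩⟩,
          mem_OInvSet.mpr ⟨⟨by omega, by push_cast; omega⟩, ⟨by omega, by push_cast; omega⟩,
            by omega, by omega⟩⟩, rfl, rfl⟩
      · -- s ≤ p < r : S4
        push_neg at hrp
        have hvt := hvq (r - (p:ℤ)) (by omega) (by omega)
        have hus := hup s hs1 hsp
        have hvneg : v (r - (p:ℤ)) < 0 := by
          rw [hw1 s hs1 hsp, hw2 r hrp hr2] at hwij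
          have hsum : u s + shiftFun p (v (r - (p:ℤ))) < 0 := by omega
          exact (shiftFun_add_left hus.1 hus.2.1 hvt.2.2).mp hsum
        refine Finset.mem_union_right _ ?_
        refine mem_prImg.mpr ⟨r, s, Finset.mem_inter.mpr ⟨Finset.mem_product.mpr
          ⟨mem_shiftIdx.mpr ⟨r - (p:ℤ),
            mem_NegaSet.mpr ⟨⟨by omega, by omega⟩, hvneg⟩, by omega⟩,
            Finset.mem_Icc.mpr ⟨hs1, hsp⟩⟩,
          mem_TInvSet.mpr (mem_InvSet.mpr ⟨⟨by omega, by push_cast; omega⟩,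
            ⟨by omega, by push_cast; omega⟩, by omega, hij⟩)⟩, rfl, rfl⟩
      · -- both > p : S2
        push_neg at hrp hsp
        have hrs : r < s := (hmono2 r s hrp hr2 hsp hs2).mp hij
        have hvr := hvq (r - (p:ℤ)) (by omega) (by omega)
        have hvs := hvq (s - (p:ℤ)) (by omega) (by omega)
        have hval : v (r - (p:ℤ)) + v (s - (p:ℤ)) < 0 := by
          rw [hw2 r hrp hr2, hw2 s hsp hs2] at hwij
          exact (shiftFun_add_neg_iff hvr.2.2 hvs.2.2).mp hwij
        refine Finset.mem_union_left _ (Finset.mem_union_left _ (Finset.mem_union_right _ ?_))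
        refine mem_prImg.mpr ⟨r, s, mem_shiftPr.mpr ⟨r - (p:ℤ), s - (p:ℤ),
          mem_NspSet.mpr ⟨⟨by omega, by omega⟩, ⟨by omega, by omega⟩, by omega, hval⟩,
          by omega, by omega⟩, rfl, rfl⟩
    · intro hx
      rcases Finset.mem_union.mp hx with hx | hx4
      · rcases Finset.mem_union.mp hx with hx | hx3
        · rcases Finset.mem_union.mp hx with hx1 | hx2
          · -- S1
            obtain ⟨r, s, hrs, rfl, rfl⟩ := mem_prImg.mp hx1
            obtain ⟨⟨hr1, hr2⟩, ⟨hs1, hs2⟩, hlt, hval⟩ := mem_NspSet.mp hrs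
            have hbr := hξrange r hr1 (by omega)
            have hbs := hξrange s hs1 (by omega)
            refine mem_NspSet.mpr ⟨⟨hbr.1, by push_cast; omega⟩, ⟨hbs.1, by push_cast; omega⟩,
              (hmono1 r s hr1 hr2 hs1 hs2).mpr hlt, ?_⟩
            rw [hw1 r hr1 hr2, hw1 s hs1 hs2]
            exact hval
          · -- S2
            obtain ⟨r, s, hrs, rfl, rfl⟩ := mem_prImg.mp hx2
            obtain ⟨a, b, hab, ha, hb⟩ := mem_shiftPr.mp hrs
            obtain ⟨⟨ha1, ha2⟩, ⟨hb1, hb2⟩, hlt, hval⟩ := mem_NspSet.mp hab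
            have hbr := hξrange r (by omega) (by omega)
            have hbs := hξrange s (by omega) (by omega)
            have har : r - (p:ℤ) = a := by omega
            have hbs' : s - (p:ℤ) = b := by omega
            refine mem_NspSet.mpr ⟨⟨hbr.1, by push_cast; omega⟩, ⟨hbs.1, by push_cast; omega⟩,
              (hmono2 r s (by omega) (by omega) (by omega) (by omega)).mpr (by omega), ?_⟩
            rw [hw2 r (by omega) (by omega), hw2 s (by omega) (by omega), har, hbs']
            exact (shiftFun_add_neg_iff (hvq a ha1 ha2).2.2 (hvq b hb1 hb2).2.2).mpr hval
        · -- I3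
          obtain ⟨r, s, hrs, rfl, rfl⟩ := mem_prImg.mp hx3
          obtain ⟨hprod, hoinv⟩ := Finset.mem_inter.mp hrs
          obtain ⟨hrIcc, hsShift⟩ := Finset.mem_product.mp hprod
          obtain ⟨hr1, hr2⟩ := Finset.mem_Icc.mp hrIcc
          obtain ⟨t, ht, hteq⟩ := mem_shiftIdx.mp hsShift
          obtain ⟨⟨ht1, ht2⟩, hvt⟩ := mem_NegaSet.mp ht
          obtain ⟨⟨_, _⟩, ⟨_, hsb⟩, hlt, hnlt⟩ := mem_OInvSet.mp hoinv
          push_cast at hsb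
          have hξlt : ξ r < ξ s := by
            rcases lt_trichotomy (ξ r) (ξ s) with h | h | h
            · exact h
            · exact absurd (ξ.injective h) (by omega)
            · exact absurd h hnlt
          have hbr := hξrange r hr1 (by omega)
          have hbs := hξrange s (by omega) (by omega)
          have hur := hup r hr1 hr2
          refine mem_NspSet.mpr ⟨⟨hbr.1, by push_cast; omega⟩, ⟨hbs.1, by push_cast; omega⟩,
            hξlt, ?_⟩
          have hteq' : s - (p:ℤ) = t := by omega
          rw [hw1 r hr1 hr2, hw2 s (by omega) (by omega), hteq']
          exact (shiftFun_add_left hur.1 hur.2.1 (hvq t ht1 ht2).2.2).mpr hvt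
      · -- S4
        obtain ⟨r, s, hrs, rfl, rfl⟩ := mem_prImg.mp hx4
        obtain ⟨hprod, htinv⟩ := Finset.mem_inter.mp hrs
        obtain ⟨hrShift, hsIcc⟩ := Finset.mem_product.mp hprod
        obtain ⟨hs1, hs2⟩ := Finset.mem_Icc.mp hsIcc
        obtain ⟨t, ht, hteq⟩ := mem_shiftIdx.mp hrShift
        obtain ⟨⟨ht1, ht2⟩, hvt⟩ := mem_NegaSet.mp ht
        obtain ⟨⟨_, _⟩, ⟨_, hrb⟩, hlt, hξlt⟩ := mem_InvSet.mp (mem_TInvSet.mp htinv)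
        push_cast at hrb
        have hbr := hξrange r (by omega) (by omega)
        have hbs := hξrange s hs1 (by omega)
        have hus := hup s hs1 hs2
        have hvtt := hvq t ht1 ht2
        refine mem_NspSet.mpr ⟨⟨hbr.1, by push_cast; omega⟩, ⟨hbs.1, by push_cast; omega⟩,
          hξlt, ?_⟩
        have hteq' : r - (p:ℤ) = t := by omega
        rw [hw1 s hs1 hs2, hw2 r (by omega) (by omega), hteq']
        have := (shiftFun_add_left hus.1 hus.2.1 hvtt.2.2).mpr hvt
        omega
  · exact disjoint_prImg (Finset.disjoint_left.mpr fun a ha hb => by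
      have h1 := (mem_NspSet.mp ha).1
      obtain ⟨r, s, hrs, hra, hsa⟩ := mem_shiftPr.mp hb
      have h2 := (mem_NspSet.mp hrs).1
      omega)
  · exact disjoint_prImg (Finset.disjoint_left.mpr fun a ha hb => by
      have h1 := (mem_NspSet.mp ha).2.1
      obtain ⟨hprod, _⟩ := Finset.mem_inter.mp hb
      obtain ⟨_, hsShift⟩ := Finset.mem_product.mp hprod
      obtain ⟨t, ht, hteq⟩ := mem_shiftIdx.mp hsShift
      have h2 := (mem_NegaSet.mp ht).1
      omega)
  · exact disjoint_prImg (Finset.disjoint_left.mpr fun a ha hb => by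
      have h1 := (mem_NspSet.mp ha).1
      obtain ⟨hprod, _⟩ := Finset.mem_inter.mp hb
      obtain ⟨hrShift, _⟩ := Finset.mem_product.mp hprod
      obtain ⟨t, ht, hteq⟩ := mem_shiftIdx.mp hrShift
      have h2 := (mem_NegaSet.mp ht).1
      omega)
  · exact disjoint_prImg (Finset.disjoint_left.mpr fun a ha hb => by
      obtain ⟨r, s, hrs, hra, hsa⟩ := mem_shiftPr.mp ha
      have h1 := (mem_NspSet.mp hrs).1
      obtain ⟨hprod, _⟩ := Finset.mem_inter.mp hb
      obtain ⟨hrIcc, _⟩ := Finset.mem_product.mp hprod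
      have h2 := Finset.mem_Icc.mp hrIcc
      omega)
  · exact disjoint_prImg (Finset.disjoint_left.mpr fun a ha hb => by
      obtain ⟨r, s, hrs, hra, hsa⟩ := mem_shiftPr.mp ha
      have h1 := (mem_NspSet.mp hrs).2.1
      obtain ⟨hprod, _⟩ := Finset.mem_inter.mp hb
      obtain ⟨_, hsIcc⟩ := Finset.mem_product.mp hprod
      have h2 := Finset.mem_Icc.mp hsIcc
      omega)
  · exact disjoint_prImg (Finset.disjoint_left.mpr fun a ha hb => by
      obtain ⟨hprod, _⟩ := Finset.mem_inter.mp ha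
      obtain ⟨hrIcc, _⟩ := Finset.mem_product.mp hprod
      have h1 := Finset.mem_Icc.mp hrIcc
      obtain ⟨hprod', _⟩ := Finset.mem_inter.mp hb
      obtain ⟨hrShift, _⟩ := Finset.mem_product.mp hprod'
      obtain ⟨t, ht, hteq⟩ := mem_shiftIdx.mp hrShift
      have h2 := (mem_NegaSet.mp ht).1
      omega)
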